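/- There exist a finite nonempty alphabet X and fuzzy finite automata F and G over X such that F is DD3-directable but not DD2-directable, and G is DD2-directable but not DD3-directable. (For instance, one may take X = {x, y}, F = ({a, b}, f) with f(a,x,a) = 0.2, f(a,x,b) = f(a,y,a) = f(b,x,b) = f(b,y,b) = 1 and all other values 0, and G = ({a, b}, g) over {x} with g(a,x,b) = 1 and all other values 0.) -/
import Mathlib


open scoped Classical

/-- Extended fuzzy transition function `f*` of a fuzzy finite automaton. -/
noncomputable def fstar {A X : Type*} [Fintype A] [Nonempty A]
    (f : A → X → A → unitInterval) : A → List X → A → unitInterval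
  | a, [], b => if b = a then 1 else 0
  | a, x :: v, b => Finset.univ.sup' Finset.univ_nonempty fun c => min (f a x c) (fstar f c v b)

/-- `F(a, w)`: the set of states reachable from `a` by `w` with positive degree. -/
def freach {A X : Type*} [Fintype A] [Nonempty A]
    (f : A → X → A → unitInterval) (a : A) (w : List X) : Set A :=
  {b | 0 < fstar f a w b}

/-- A word is DD1-directing: some state `c` is reached from every state with the same
positive degree `r`, and no other state is reachable. -/
def IsDD1 {A X : Type*} [Fintype A] [Nonempty A] (f : A → X → A → unitInterval)
    (w : List X) : Prop :=
  ∃ (c : A) (r : unitInterval), 0 < r ∧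
    ∀ a, fstar f a w c = r ∧ ∀ b, b ≠ c → fstar f a w b = 0

/-- A word is DD2-directing: the fuzzy set of reached states is independent of the start. -/
def IsDD2 {A X : Type*} [Fintype A] [Nonempty A] (f : A → X → A → unitInterval)
    (w : List X) : Prop :=
  ∀ a b c, fstar f a w c = fstar f b w c

/-- A word is DD3-directing: some state `c` has positive and maximal reachability degree
from every state. -/
def IsDD3 {A X : Type*} [Fintype A] [Nonempty A] (f : A → X → A → unitInterval)
    (w : List X) : Prop :=
  ∃ c, ∀ a, 0 < fstar f a w c ∧ ∀ b, fstar f a w b ≤ fstar f a w c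

def DD1set {A X : Type*} [Fintype A] [Nonempty A] (f : A → X → A → unitInterval) :
    Set (List X) := {w | IsDD1 f w}

def DD2set {A X : Type*} [Fintype A] [Nonempty A] (f : A → X → A → unitInterval) :
    Set (List X) := {w | IsDD2 f w}

def DD3set {A X : Type*} [Fintype A] [Nonempty A] (f : A → X → A → unitInterval) :
    Set (List X) := {w | IsDD3 f w}

noncomputable def hl : unitInterval := ⟨1/2, by norm_num⟩

lemma hl_pos : (0:unitInterval) < hl := Subtype.mk_lt_mk.mpr (by norm_num)

lemma hl_le_one : hl ≤ 1 := unitInterval.le_one'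

noncomputable def ff : Bool → Unit → Bool → unitInterval :=
  fun a _ c => if c then 1 else if a then 0 else hl

def gg : Bool → Unit → Bool → unitInterval :=
  fun a _ c => if !a && c then 1 else 0

lemma sup'_bool (h : Bool → unitInterval) :
    Finset.univ.sup' Finset.univ_nonempty h = max (h false) (h true) := by
  apply le_antisymm
  · refine Finset.sup'_le _ _ fun b _ => ?_
    cases b
    · exact le_max_left _ _
    · exact le_max_right _ _
  · exact max_le (Finset.le_sup' _ (Finset.mem_univ _)) (Finset.le_sup' _ (Finset.mem_univ _))

lemma fstar_cons {A X : Type*} [Fintype A] [Nonempty A] (f : A → X → A → unitInterval)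
    (a : A) (x : X) (v : List X) (b : A) :
    fstar f a (x :: v) b =
      Finset.univ.sup' Finset.univ_nonempty fun c => min (f a x c) (fstar f c v b) := rfl

lemma min_zero' (x : unitInterval) : min (0:unitInterval) x = 0 :=
  min_eq_left unitInterval.nonneg'

lemma min_one' (x : unitInterval) : min (1:unitInterval) x = x :=
  min_eq_right unitInterval.le_one'

lemma max_zero' (x : unitInterval) : max (0:unitInterval) x = x :=
  max_eq_right unitInterval.nonneg'

lemma fstar_ff_true (w : List Unit) :
    fstar ff true w true = 1 ∧ fstar ff true w false = 0 := by
  induction w with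
  | nil => constructor <;> simp [fstar]
  | cons x v ih =>
    have h : ∀ b, fstar ff true (x :: v) b = fstar ff true v b := by
      intro b
      rw [fstar_cons, sup'_bool]
      show max (min (ff true x false) _) (min (ff true x true) _) = _
      simp only [ff, if_true, Bool.false_eq_true, if_false]
      rw [min_zero', min_one', max_zero']
    rw [h, h]; exact ih

lemma fstar_ff_false (w : List Unit) (hw : w ≠ []) :
    fstar ff false w true = 1 ∧ fstar ff false w false = hl := by
  induction w with
  | nil => exact absurd rfl hw
  | cons x v ih =>
    have h : ∀ b, fstar ff false (x :: v) b
        = max (min hl (fstar ff false v b)) (fstar ff true v b) := by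
      intro b
      rw [fstar_cons, sup'_bool]
      show max (min (ff false x false) _) (min (ff false x true) _) = _
      simp only [ff, if_true, Bool.false_eq_true, if_false]
      rw [min_one']
    constructor
    · rw [h, (fstar_ff_true v).1]
      exact max_eq_right ((min_le_left _ _).trans hl_le_one)
    · rw [h, (fstar_ff_true v).2, max_comm, max_zero']
      rcases eq_or_ne v [] with rfl | hv
      · show min hl (fstar ff false [] false) = hl
        have : fstar ff false [] false = 1 := by simp [fstar]
        rw [this]; exact min_eq_left hl_le_one
      · rw [(ih hv).2, min_self]

lemma fstar_gg_true (x : Unit) (v : List Unit) (c : Bool) :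
    fstar gg true (x :: v) c = 0 := by
  rw [fstar_cons, sup'_bool]
  show max (min (gg true x false) _) (min (gg true x true) _) = _
  simp only [gg, Bool.not_true, Bool.false_and, Bool.false_eq_true, if_false]
  rw [min_zero', min_zero', max_self]

lemma fstar_gg_false2 (x y : Unit) (v : List Unit) (c : Bool) :
    fstar gg false (x :: y :: v) c = 0 := by
  rw [fstar_cons, sup'_bool]
  show max (min (gg false x false) _) (min (gg false x true) _) = _
  simp only [gg, Bool.not_false, Bool.true_and, Bool.false_eq_true, if_false, if_true]
  rw [min_zero', min_one', fstar_gg_true, max_self]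

/-- There are a finite nonempty alphabet `X` and FFAs `F`, `G` over `X` such that `F` is
DD3-directable but not DD2-directable, and `G` is DD2-directable but not DD3-directable. -/
theorem stmt19 :
    ∃ (X : Type) (iXF : Fintype X) (iXN : Nonempty X)
      (A : Type) (iAF : Fintype A) (iAN : Nonempty A)
      (f : A → X → A → unitInterval)
      (B : Type) (iBF : Fintype B) (iBN : Nonempty B)
      (g : B → X → B → unitInterval),
      (∃ w : List X, @IsDD3 A X iAF iAN f w) ∧
      ¬ (∃ w : List X, @IsDD2 A X iAF iAN f w) ∧
      (∃ w : List X, @IsDD2 B X iBF iBN g w) ∧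
      ¬ (∃ w : List X, @IsDD3 B X iBF iBN g w) := by
  refine ⟨Unit, inferInstance, inferInstance, Bool, inferInstance, inferInstance, ff,
    Bool, inferInstance, inferInstance, gg, ?_, ?_, ?_, ?_⟩
  · -- F is DD3-directable with w = [()]
    refine ⟨[()], true, fun a => ?_⟩
    cases a
    · refine ⟨by rw [(fstar_ff_false [()] (by simp)).1]; norm_num, fun b => ?_⟩
      rw [(fstar_ff_false [()] (by simp)).1]; exact unitInterval.le_one'
    · refine ⟨by rw [(fstar_ff_true [()]).1]; norm_num, fun b => ?_⟩
      rw [(fstar_ff_true [()]).1]; exact unitInterval.le_one'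
  · -- F is not DD2-directable
    rintro ⟨w, hw⟩
    rcases eq_or_ne w [] with rfl | hne
    · have h := hw true false true
      have h1 : fstar ff true ([] : List Unit) true = 1 := by simp [fstar]
      have h2 : fstar ff false ([] : List Unit) true = 0 := by simp [fstar]
      rw [h1, h2] at h
      exact one_ne_zero h
    · have h := hw true false false
      rw [(fstar_ff_true w).2, (fstar_ff_false w hne).2] at h
      exact absurd h.symm (ne_of_gt hl_pos)
  · -- G is DD2-directable with w = [(),()]
    refine ⟨[(), ()], fun a b c => ?_⟩
    have h : ∀ a : Bool, fstar gg a [(), ()] c = 0 := by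
      intro a; cases a
      · exact fstar_gg_false2 () () [] c
      · exact fstar_gg_true () [()] c
    rw [h a, h b]
  · -- G is not DD3-directable
    rintro ⟨w, c, hc⟩
    rcases eq_or_ne w [] with rfl | hne
    · have h1 := (hc true).1
      have h2 := (hc false).1
      by_cases hct : c = true
      · subst hct
        have : fstar gg false ([] : List Unit) true = 0 := by simp [fstar]
        rw [this] at h2; exact lt_irrefl _ h2
      · have hcf : c = false := by simpa using hct
        subst hcf
        have : fstar gg true ([] : List Unit) false = 0 := by simp [fstar]
        rw [this] at h1; exact lt_irrefl _ h1
    · obtain ⟨x, v, rfl⟩ := List.exists_cons_of_ne_nil hne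
      have h := (hc true).1
      rw [fstar_gg_true x v c] at h
      exact lt_irrefl _ h
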